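/- Every orientation of an ordered cycle of odd length is directable: some set of vertices can be pushed so that the resulting orientation is a directed cycle (all arcs forward, or all arcs backward, with respect to the given cyclic traversal). -/

import Mathlib

open Fin.NatCast in
/-- Prefix xor of `o` over indices `< m` (indices taken as `Fin n` via natCast). -/
def prefXor (n : ℕ) [NeZero n] (o : Fin n → Bool) : ℕ → Bool
  | 0 => false
  | m + 1 => Bool.xor (prefXor n o m) (o m)

open Fin.NatCast in
/-- An orientation of the ordered cycle `v₀v₁⋯v_{2k}v₀` is encoded by `o : Fin (2k+1) → Bool`:
`o i = true` iff the arc between `vᵢ` and `vᵢ₊₁` is the forward arc `vᵢ → vᵢ₊₁`.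
Pushing the vertex set `{vᵢ | s i = true}` changes the bit of edge `i` by
`xor (s i) (s (i+1))`. Every orientation of an odd ordered cycle is directable:
some push makes all arcs forward, or all arcs backward. -/
theorem stmt5 (k : ℕ) (hk : 1 ≤ k) (o : Fin (2 * k + 1) → Bool) :
    ∃ s : Fin (2 * k + 1) → Bool,
      (∀ i, Bool.xor (o i) (Bool.xor (s i) (s (i + 1))) = true) ∨
      (∀ i, Bool.xor (o i) (Bool.xor (s i) (s (i + 1))) = false) := by
  haveI : NeZero (2 * k + 1) := ⟨by omega⟩
  set t : Bool := prefXor (2 * k + 1) o (2 * k + 1) with ht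
  set s : Fin (2 * k + 1) → Bool :=
    fun i => Bool.xor (prefXor (2 * k + 1) o i.val) (decide (i.val % 2 = 1) && t) with hs
  have key : ∀ i : Fin (2 * k + 1), Bool.xor (o i) (Bool.xor (s i) (s (i + 1))) = t := by
    intro i
    have hiv : i.val < 2 * k + 1 := i.isLt
    have hadd : ((i + 1 : Fin (2 * k + 1))).val = (i.val + 1) % (2 * k + 1) := by
      simp [Fin.add_def]
    rcases Nat.lt_or_ge i.val (2 * k) with hlt | hge
    · -- non-wrapping edge
      have h1 : ((i + 1 : Fin (2 * k + 1))).val = i.val + 1 := by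
        rw [hadd, Nat.mod_eq_of_lt (by omega)]
      have hcast : ((i.val : ℕ) : Fin (2 * k + 1)) = i := Fin.cast_val_eq_self i
      simp only [hs, h1, prefXor, hcast]
      rcases Nat.even_or_odd i.val with he | hodd
      · have e1 : i.val % 2 = 0 := Nat.even_iff.mp he
        have e2 : (i.val + 1) % 2 = 1 := by omega
        simp only [e1, e2]
        cases o i <;> cases t <;> cases prefXor (2 * k + 1) o i.val <;> simp
      · have e1 : i.val % 2 = 1 := Nat.odd_iff.mp hodd
        have e2 : (i.val + 1) % 2 = 0 := by omega
        simp only [e1, e2]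
        cases o i <;> cases t <;> cases prefXor (2 * k + 1) o i.val <;> simp
    · -- wrapping edge: i.val = 2k (even)
      have hieq : i.val = 2 * k := by omega
      have h1 : ((i + 1 : Fin (2 * k + 1))).val = 0 := by
        rw [hadd, hieq]; simp
      have hcast : ((2 * k : ℕ) : Fin (2 * k + 1)) = i := by
        apply Fin.ext
        rw [Fin.val_natCast, Nat.mod_eq_of_lt (by omega), hieq]
      have hpar : (2 * k) % 2 = 0 := by omega
      have htexp : t = Bool.xor (prefXor (2 * k + 1) o (2 * k)) (o i) := by
        rw [ht]
        show prefXor (2 * k + 1) o (2 * k + 1) = _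
        rw [show prefXor (2 * k + 1) o (2 * k + 1)
            = Bool.xor (prefXor (2 * k + 1) o (2 * k)) (o ((2 * k : ℕ) : Fin (2 * k + 1)))
            from rfl, hcast]
      simp only [hs, h1, hieq, hpar, prefXor]
      rw [htexp]
      cases o i <;> cases prefXor (2 * k + 1) o (2 * k) <;> simp
  refine ⟨s, ?_⟩
  cases hT : t
  · right; intro i; rw [key i, hT]
  · left; intro i; rw [key i, hT]
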